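/- arXiv:2109.14854 — 5 statements merged into one kernel-verified Lean document; each statement's English description precedes it below -/
import Mathlib

section
/- The stacked ReLU function ξ⁺(x) = Σ_{l=1}^{d} w_l · ReLU(x + b_l), with weights satisfying Σ_{i=1}^{l} w_i ≥ 0 for all l = 1,...,d, and biases satisfying b_1 = 0 and b_l ≤ b_{l-1} for l = 2,...,d, is monotonically nondecreasing on (0,∞) and is identically zero on (-∞, 0]. -/
open Finset

private lemma abel_nat : ∀ (n : ℕ) (w c : ℕ → ℝ),
    (∀ l < n, 0 ≤ ∑ i ∈ Finset.range (l+1), w i) →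
    (∀ i < n, 0 ≤ c i) →
    (∀ i j, i ≤ j → j < n → c j ≤ c i) →
    0 ≤ ∑ i ∈ Finset.range n, w i * c i := by
  intro n
  induction n with
  | zero => intro w c _ _ _; simp
  | succ n ih =>
    intro w c hw hc hanti
    have key : ∑ i ∈ Finset.range (n+1), w i * c i
        = (∑ i ∈ Finset.range (n+1), w i * (c i - c n)) +
          c n * ∑ i ∈ Finset.range (n+1), w i := by
      rw [Finset.mul_sum, ← Finset.sum_add_distrib]
      apply Finset.sum_congr rfl
      intro i _; ring
    rw [key]
    have h1 : 0 ≤ ∑ i ∈ Finset.range (n+1), w i * (c i - c n) := by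
      rw [Finset.sum_range_succ]
      have : w n * (c n - c n) = 0 := by ring
      rw [this, add_zero]
      apply ih w (fun i => c i - c n)
      · intro l hl; exact hw l (Nat.lt_succ_of_lt hl)
      · intro i hi
        have := hanti i n (Nat.le_of_lt hi) (Nat.lt_succ_self n)
        linarith
      · intro i j hij hj
        have := hanti i j hij (Nat.lt_succ_of_lt hj)
        linarith
    have h2 : 0 ≤ c n * ∑ i ∈ Finset.range (n+1), w i :=
      mul_nonneg (hc n (Nat.lt_succ_self n)) (hw n (Nat.lt_succ_self n))
    linarith

private lemma relu_incr_nonneg {x y a : ℝ} (hxy : x ≤ y) :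
    0 ≤ max (y + a) 0 - max (x + a) 0 := by
  rcases le_total (x + a) 0 with h | h <;> rcases le_total (y + a) 0 with h' | h' <;>
    simp [max_eq_left, max_eq_right, *] <;> linarith [le_max_left (y+a) 0, le_max_right (y+a) 0]

private lemma relu_incr_anti {x y a a' : ℝ} (hxy : x ≤ y) (ha : a' ≤ a) :
    max (y + a') 0 - max (x + a') 0 ≤ max (y + a) 0 - max (x + a) 0 := by
  rcases le_total (x + a) 0 with h1 | h1 <;> rcases le_total (y + a) 0 with h2 | h2 <;>
  rcases le_total (x + a') 0 with h3 | h3 <;> rcases le_total (y + a') 0 with h4 | h4 <;>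
  simp [max_def] <;> split_ifs <;> linarith

theorem stackedReLU_pos_monotone (d : ℕ) (hd : 0 < d) (w b : Fin d → ℝ)
    (hw : ∀ l : Fin d, 0 ≤ ∑ i ∈ Finset.univ.filter (fun i => i ≤ l), w i)
    (hb1 : b ⟨0, hd⟩ = 0)
    (hbmono : ∀ i j : Fin d, i ≤ j → b j ≤ b i) :
    MonotoneOn (fun x : ℝ => ∑ l, w l * max (x + b l) 0) (Set.Ioi 0) ∧
    ∀ x : ℝ, x ≤ 0 → ∑ l, w l * max (x + b l) 0 = 0 := by
  -- auxiliary ℕ-indexed versions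
  set w' : ℕ → ℝ := fun i => if h : i < d then w ⟨i, h⟩ else 0 with hw'def
  -- partial sum bridge
  have hpartial : ∀ l, l < d → 0 ≤ ∑ i ∈ Finset.range (l+1), w' i := by
    intro l hl
    have := hw ⟨l, hl⟩
    have heq : ∑ i ∈ Finset.univ.filter (fun i => i ≤ (⟨l, hl⟩ : Fin d)), w i
        = ∑ i ∈ Finset.range (l+1), w' i := by
      rw [Finset.sum_filter]
      have step1 : ∑ a : Fin d, (if a ≤ (⟨l, hl⟩ : Fin d) then w a else 0)
          = ∑ a : Fin d, (fun i : ℕ => if i ≤ l then w' i else 0) (a : ℕ) := by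
        apply Finset.sum_congr rfl
        intro a _
        have hid : (a : ℕ) < d := a.isLt
        simp only [hw'def, hid, dif_pos, Fin.le_def]
      rw [step1, Fin.sum_univ_eq_sum_range (fun i : ℕ => if i ≤ l then w' i else 0) d]
      have step2 : ∑ i ∈ Finset.range (l+1), w' i
          = ∑ i ∈ Finset.range (l+1), (if i ≤ l then w' i else 0) := by
        apply Finset.sum_congr rfl
        intro i hi
        simp only [Finset.mem_range, Nat.lt_succ_iff] at hi
        simp [hi]
      rw [step2]
      symm
      apply Finset.sum_subset (Finset.range_subset_range.mpr hl)
      intro i _ hni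
      simp only [Finset.mem_range, Nat.lt_succ_iff, not_le] at hni
      simp [Nat.not_le.mpr hni]
    rw [heq] at this
    exact this
  constructor
  · -- monotone
    intro x _ y _ hxy
    simp only
    rw [← sub_nonneg, ← Finset.sum_sub_distrib]
    have : ∀ l : Fin d, w l * max (y + b l) 0 - w l * max (x + b l) 0
        = w l * (max (y + b l) 0 - max (x + b l) 0) := by intro l; ring
    simp only [this]
    set c : ℕ → ℝ := fun i => if h : i < d then max (y + b ⟨i, h⟩) 0 - max (x + b ⟨i, h⟩) 0 else 0 with hcdef
    have hsum : ∑ l : Fin d, w l * (max (y + b l) 0 - max (x + b l) 0)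
        = ∑ i ∈ Finset.range d, w' i * c i := by
      have step1 : ∑ l : Fin d, w l * (max (y + b l) 0 - max (x + b l) 0)
          = ∑ l : Fin d, (fun i : ℕ => w' i * c i) (l : ℕ) := by
        apply Finset.sum_congr rfl
        intro l _
        have hid : (l : ℕ) < d := l.isLt
        simp [hw'def, hcdef, hid]
      rw [step1, Fin.sum_univ_eq_sum_range (fun i : ℕ => w' i * c i) d]
    rw [hsum]
    apply abel_nat
    · exact hpartial
    · intro i hi
      simp only [hcdef, hi, dif_pos]
      exact relu_incr_nonneg hxy
    · intro i j hij hj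
      have hi : i < d := lt_of_le_of_lt hij hj
      simp only [hcdef, hi, hj, dif_pos]
      exact relu_incr_anti hxy (hbmono ⟨i, hi⟩ ⟨j, hj⟩ hij)
  · intro x hx
    apply Finset.sum_eq_zero
    intro l _
    have hble : b l ≤ 0 := by
      rw [← hb1]
      exact hbmono ⟨0, hd⟩ l (Fin.mk_le_of_le_val (Nat.zero_le _))
    have : max (x + b l) 0 = 0 := max_eq_right (by linarith)
    rw [this, mul_zero]
end

section
/- The stacked ReLU function ξ⁻(x) = Σ_{l=1}^{d} w_l · ReLU(-x + b_l), with partial sums Σ_{i=1}^{l} w_i ≤ 0 for all l, b_1 = 0, and b_l ≤ b_{l-1} for l ≥ 2, is monotonically nondecreasing on (-∞, 0) and identically zero on [0, ∞). -/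
lemma stacked_key (n : ℕ) (w : ℕ → ℝ)
    (hW : ∀ l < n, ∑ i ∈ Finset.range (l+1), w i ≤ 0) :
    ∀ g : ℕ → ℝ, (∀ i j, i ≤ j → j < n → g i ≤ g j) → (∀ i < n, g i ≤ 0) →
    0 ≤ ∑ i ∈ Finset.range n, w i * g i := by
  induction n with
  | zero => simp
  | succ n ih =>
    intro g hg hgneg
    have key1 : 0 ≤ ∑ i ∈ Finset.range (n+1), w i * (g i - g n) := by
      rw [Finset.sum_range_succ]
      simp only [sub_self, mul_zero, add_zero]
      apply ih (fun l hl => hW l (by omega)) (fun i => g i - g n)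
      · intro i j hij hj; have := hg i j hij (by omega); linarith
      · intro i hi; have := hg i n (by omega) (by omega); linarith
    have key2 : 0 ≤ g n * ∑ i ∈ Finset.range (n+1), w i := by
      have h1 := hgneg n (by omega)
      have h2 := hW n (by omega)
      nlinarith
    have expand : ∑ i ∈ Finset.range (n+1), w i * g i
        = ∑ i ∈ Finset.range (n+1), w i * (g i - g n)
          + g n * ∑ i ∈ Finset.range (n+1), w i := by
      rw [Finset.mul_sum, ← Finset.sum_add_distrib]
      apply Finset.sum_congr rfl; intro i _; ring
    linarith

lemma stacked_hmono (x y s t : ℝ) (hxy : x ≤ y) (hst : s ≤ t) :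
    max (t - y) 0 - max (t - x) 0 ≤ max (s - y) 0 - max (s - x) 0 := by
  rcases max_cases (t-y) 0 with ⟨e1,f1⟩|⟨e1,f1⟩ <;>
  rcases max_cases (s-y) 0 with ⟨e2,f2⟩|⟨e2,f2⟩ <;>
  rcases max_cases (t-x) 0 with ⟨e3,f3⟩|⟨e3,f3⟩ <;>
  rcases max_cases (s-x) 0 with ⟨e4,f4⟩|⟨e4,f4⟩ <;>
  rw [e1, e2, e3, e4] <;> linarith

theorem stackedReLU_neg_monotone (d : ℕ) (hd : 0 < d) (w b : Fin d → ℝ)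
    (hw : ∀ l : Fin d, ∑ i ∈ Finset.univ.filter (fun i => i ≤ l), w i ≤ 0)
    (hb1 : b ⟨0, hd⟩ = 0)
    (hbmono : ∀ i j : Fin d, i ≤ j → b j ≤ b i) :
    MonotoneOn (fun x : ℝ => ∑ l, w l * max (-x + b l) 0) (Set.Iio 0) ∧
    ∀ x : ℝ, 0 ≤ x → ∑ l, w l * max (-x + b l) 0 = 0 := by
  constructor
  · intro x hx y hy hxy
    simp only
    rw [← sub_nonneg, ← Finset.sum_sub_distrib]
    have hrw : ∀ l : Fin d, w l * max (-y + b l) 0 - w l * max (-x + b l) 0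
        = w l * ((max (b l - y) 0) - (max (b l - x) 0)) := by
      intro l
      have h1 : -y + b l = b l - y := by ring
      have h2 : -x + b l = b l - x := by ring
      rw [h1, h2]; ring
    rw [Finset.sum_congr rfl (fun l _ => hrw l)]
    set w' : ℕ → ℝ := fun i => if h : i < d then w ⟨i, h⟩ else 0 with hw'
    set g' : ℕ → ℝ := fun i => if h : i < d then max (b ⟨i,h⟩ - y) 0 - max (b ⟨i,h⟩ - x) 0 else 0 with hg'
    have hconv : ∑ l : Fin d, w l * (max (b l - y) 0 - max (b l - x) 0)
        = ∑ i ∈ Finset.range d, w' i * g' i := by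
      rw [Finset.sum_range]
      apply Finset.sum_congr rfl
      intro i _
      simp [hw', hg', i.isLt]
    rw [hconv]
    apply stacked_key
    · intro l hl
      have h := hw ⟨l, hl⟩
      have hset : (Finset.range d).filter (fun i => i ≤ l) = Finset.range (l+1) := by
        ext i; simp; omega
      have heq : ∑ i ∈ Finset.range (l+1), w' i
          = ∑ i ∈ Finset.univ.filter (fun i => i ≤ (⟨l, hl⟩ : Fin d)), w i := by
        rw [← hset, Finset.sum_filter, Finset.sum_filter, Finset.sum_range]
        apply Finset.sum_congr rfl
        intro i _
        simp [hw', Fin.mk_le_mk, Fin.le_def, i.isLt]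
      rw [heq]; exact h
    · intro i j hij hj
      simp only [hg']
      rw [dif_pos (lt_of_le_of_lt hij hj), dif_pos hj]
      exact stacked_hmono x y _ _ hxy (hbmono ⟨i, _⟩ ⟨j, hj⟩ hij)
    · intro i hi
      simp only [hg', dif_pos hi]
      have : max (b ⟨i,hi⟩ - y) 0 ≤ max (b ⟨i,hi⟩ - x) 0 :=
        max_le_max (by linarith) le_rfl
      linarith
  · intro x hx
    apply Finset.sum_eq_zero
    intro l _
    have hbl : b l ≤ 0 := hb1 ▸ hbmono ⟨0, hd⟩ l (by simp [Fin.le_def])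
    have hm : max (-x + b l) 0 = 0 := max_eq_right (by linarith)
    rw [hm, mul_zero]
end

section
/- Let X be an n×n symmetric positive definite matrix and g : ℝⁿ → ℝⁿ act componentwise where each g_i is differentiable, satisfies g_i(v_i) = 0 exactly when v_i ∈ [v̲_i, v̄_i], and g_i'(v_i) < 0 for v_i outside [v̲_i, v̄_i] while g_i'(v_i) = 0 inside. If v ∈ ℝⁿ satisfies diag(g_i'(v_i)) · X · g(v) = 0, then g(v) = 0, i.e., v_i ∈ [v̲_i, v̄_i] for all i. -/
theorem invariant_set_in_deadband {n : ℕ} (X : Matrix (Fin n) (Fin n) ℝ)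
    (hX : X.PosDef) (vlo vhi : Fin n → ℝ) (hlt : ∀ i, vlo i < vhi i)
    (g : Fin n → ℝ → ℝ)
    (hdiff : ∀ i, Differentiable ℝ (g i))
    (hzero : ∀ i x, g i x = 0 ↔ x ∈ Set.Icc (vlo i) (vhi i))
    (hneg : ∀ i x, x ∉ Set.Icc (vlo i) (vhi i) → deriv (g i) x < 0)
    (hzeroderiv : ∀ i x, x ∈ Set.Icc (vlo i) (vhi i) → deriv (g i) x = 0)
    (v : Fin n → ℝ)
    (h : ∀ i, deriv (g i) (v i) * X.mulVec (fun j => g j (v j)) i = 0) :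
    ∀ i, v i ∈ Set.Icc (vlo i) (vhi i) := by
  set w : Fin n → ℝ := fun j => g j (v j) with hw
  have hkey : ∀ i, w i * X.mulVec w i = 0 := by
    intro i
    by_cases hi : v i ∈ Set.Icc (vlo i) (vhi i)
    · have : w i = 0 := (hzero i (v i)).mpr hi
      simp [this]
    · have hd : deriv (g i) (v i) < 0 := hneg i (v i) hi
      have : X.mulVec w i = 0 := by
        have := h i
        rcases mul_eq_zero.mp this with h1 | h2
        · exact absurd h1 (ne_of_lt hd)
        · exact h2
      simp [this]
  have hdot : dotProduct w (X.mulVec w) = 0 := by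
    simp only [dotProduct]
    exact Finset.sum_eq_zero fun i _ => hkey i
  have hw0 : w = 0 := by
    by_contra hne
    have := hX.dotProduct_mulVec_pos hne
    rw [show star w = w from rfl] at this
    rw [hdot] at this
    exact lt_irrefl _ this
  intro i
  have : w i = 0 := by rw [hw0]; rfl
  exact (hzero i (v i)).mp this
end

section
/- Let X be a symmetric positive definite matrix and g : ℝⁿ → ℝⁿ componentwise with each g_i continuous, g_i(v_i) = 0 for v_i ∈ [v̲_i, v̄_i], strictly decreasing on (-∞, v̲_i] and on [v̄_i, ∞), and |g_i(v_i)| → ∞ as |v_i| → ∞. Then V(v) = ½ g(v)ᵀ X g(v) is nonnegative, radially unbounded (V(v) → ∞ as ‖v‖ → ∞), and V(v) = 0 if and only if v_i ∈ [v̲_i, v̄_i] for all i. -/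
open Matrix

lemma quad_cont {n : ℕ} (X : Matrix (Fin n) (Fin n) ℝ) :
    Continuous (fun x : Fin n → ℝ => x ⬝ᵥ X.mulVec x) := by
  simp only [dotProduct, Matrix.mulVec]
  fun_prop

lemma quad_lb {n : ℕ} (X : Matrix (Fin n) (Fin n) ℝ) (hX : X.PosDef) :
    ∃ c > 0, ∀ x : Fin n → ℝ, c * ‖x‖ ^ 2 ≤ x ⬝ᵥ X.mulVec x := by
  rcases Nat.eq_zero_or_pos n with h0 | hn
  · refine ⟨1, one_pos, fun x => ?_⟩
    subst h0
    have hx : x = 0 := Subsingleton.elim _ _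
    rw [hx, norm_zero]
    simp [dotProduct]
  · have hne : (Metric.sphere (0 : Fin n → ℝ) 1).Nonempty := by
      refine ⟨Pi.single ⟨0, hn⟩ 1, ?_⟩
      simp [Pi.norm_single]
    obtain ⟨x₀, hx₀S, hmin⟩ := (isCompact_sphere (0 : Fin n → ℝ) 1).exists_isMinOn hne
      (quad_cont X).continuousOn
    have hx₀ : ‖x₀‖ = 1 := by simpa using hx₀S
    have hx₀ne : x₀ ≠ 0 := by intro h; rw [h] at hx₀; simp at hx₀
    refine ⟨x₀ ⬝ᵥ X.mulVec x₀, by simpa using hX.re_dotProduct_pos hx₀ne, fun x => ?_⟩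
    rcases eq_or_ne x 0 with rfl | hx
    · simp [dotProduct]
    · have hnx : (0:ℝ) < ‖x‖ := norm_pos_iff.mpr hx
      obtain ⟨u, huS, hxu⟩ : ∃ u : Fin n → ℝ, u ∈ Metric.sphere (0 : Fin n → ℝ) 1 ∧
          x = ‖x‖ • u := by
        refine ⟨‖x‖⁻¹ • x, ?_, ?_⟩
        · simp [norm_smul, abs_of_pos (inv_pos.mpr hnx), inv_mul_cancel₀ hnx.ne']
        · rw [smul_smul, mul_inv_cancel₀ hnx.ne', one_smul]
      have hle : x₀ ⬝ᵥ X.mulVec x₀ ≤ u ⬝ᵥ X.mulVec u := hmin huS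
      have key : x ⬝ᵥ X.mulVec x = ‖x‖ ^ 2 * (u ⬝ᵥ X.mulVec u) := by
        conv_lhs => rw [hxu]
        simp only [Matrix.mulVec_smul, smul_dotProduct, dotProduct_smul,
          smul_eq_mul, sq]
        ring
      nlinarith [sq_nonneg ‖x‖]

theorem krasovskii_lyapunov_properties {n : ℕ} (X : Matrix (Fin n) (Fin n) ℝ)
    (hX : X.PosDef) (vlo vhi : Fin n → ℝ) (hlt : ∀ i, vlo i < vhi i)
    (g : Fin n → ℝ → ℝ)
    (hcont : ∀ i, Continuous (g i))
    (hzero : ∀ i, ∀ x ∈ Set.Icc (vlo i) (vhi i), g i x = 0)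
    (hdec1 : ∀ i, StrictAntiOn (g i) (Set.Iic (vlo i)))
    (hdec2 : ∀ i, StrictAntiOn (g i) (Set.Ici (vhi i)))
    (hcoe1 : ∀ i, Filter.Tendsto (fun x => |g i x|) Filter.atTop Filter.atTop)
    (hcoe2 : ∀ i, Filter.Tendsto (fun x => |g i x|) Filter.atBot Filter.atTop) :
    (∀ v : Fin n → ℝ,
        0 ≤ (1 / 2) * ((fun i => g i (v i)) ⬝ᵥ X.mulVec fun i => g i (v i))) ∧
    (∀ M : ℝ, ∃ R : ℝ, ∀ v : Fin n → ℝ, R ≤ ‖v‖ →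
        M ≤ (1 / 2) * ((fun i => g i (v i)) ⬝ᵥ X.mulVec fun i => g i (v i))) ∧
    (∀ v : Fin n → ℝ,
        (1 / 2) * ((fun i => g i (v i)) ⬝ᵥ X.mulVec fun i => g i (v i)) = 0 ↔
          ∀ i, v i ∈ Set.Icc (vlo i) (vhi i)) := by
  have hnn : ∀ x : Fin n → ℝ, 0 ≤ x ⬝ᵥ X.mulVec x := fun x => by
    simpa using hX.posSemidef.re_dotProduct_nonneg x
  refine ⟨fun v => by have := hnn (fun i => g i (v i)); linarith, ?_, ?_⟩
  · -- radial unboundedness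
    intro M
    rcases Nat.eq_zero_or_pos n with h0 | hn
    · refine ⟨1, fun v hv => ?_⟩
      exfalso
      subst h0
      have : v = 0 := Subsingleton.elim _ _
      rw [this, norm_zero] at hv
      linarith
    · obtain ⟨c, hc, hcb⟩ := quad_lb X hX
      set M' : ℝ := Real.sqrt (2 * max M 0 / c) with hM'
      have hM'nn : 0 ≤ M' := Real.sqrt_nonneg _
      have hM'sq : M' ^ 2 = 2 * max M 0 / c := by
        rw [hM', Real.sq_sqrt]
        positivity
      have hpick : ∀ i : Fin n, ∃ r : ℝ, ∀ x : ℝ, r ≤ |x| → M' ≤ |g i x| := by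
        intro i
        obtain ⟨a, ha⟩ := Filter.eventually_atTop.mp ((hcoe1 i).eventually_ge_atTop M')
        obtain ⟨b, hb⟩ := Filter.eventually_atBot.mp ((hcoe2 i).eventually_ge_atTop M')
        refine ⟨max |a| |b|, fun x hx => ?_⟩
        rcases le_or_gt 0 x with hx0 | hx0
        · refine ha x ?_
          have : |a| ≤ x := le_trans (le_max_left _ _) (by rwa [abs_of_nonneg hx0] at hx)
          linarith [le_abs_self a, neg_abs_le a]
        · refine hb x ?_
          have : |b| ≤ -x := le_trans (le_max_right _ _) (by rwa [abs_of_neg hx0] at hx)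
          linarith [le_abs_self b, neg_abs_le b]
      choose r hr using hpick
      haveI : Nonempty (Fin n) := ⟨⟨0, hn⟩⟩
      set R : ℝ := max 1 (Finset.univ.sup' Finset.univ_nonempty r) with hR
      refine ⟨R, fun v hv => ?_⟩
      have hR1 : (0:ℝ) < R := lt_of_lt_of_le one_pos (le_max_left _ _)
      obtain ⟨i, hi⟩ : ∃ i, R ≤ |v i| := by
        by_contra h
        push_neg at h
        have : ‖v‖ < R := (pi_norm_lt_iff hR1).mpr fun i => by
          simpa [Real.norm_eq_abs] using h i
        linarith
      have hri : r i ≤ R := le_trans (Finset.le_sup' r (Finset.mem_univ i)) (le_max_right _ _)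
      have hgi : M' ≤ |g i (v i)| := hr i (v i) (le_trans hri hi)
      have hnorm : M' ≤ ‖(fun j => g j (v j))‖ := by
        refine le_trans hgi ?_
        simpa [Real.norm_eq_abs] using norm_le_pi_norm (fun j => g j (v j)) i
      have hform := hcb (fun j => g j (v j))
      have hsq : M' ^ 2 ≤ ‖(fun j => g j (v j))‖ ^ 2 := by
        apply sq_le_sq' <;> nlinarith
      have : c * M' ^ 2 ≤ c * ‖(fun j => g j (v j))‖ ^ 2 :=
        mul_le_mul_of_nonneg_left hsq hc.le
      have hMmax : (1/2 : ℝ) * (c * M' ^ 2) = max M 0 := by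
        rw [hM'sq]; field_simp
      nlinarith [le_max_left M 0]
  · -- zero set
    intro v
    constructor
    · intro h
      intro i
      have hzv : (fun j => g j (v j)) = 0 := by
        by_contra hne
        have := hX.re_dotProduct_pos hne
        simp only [RCLike.star_def, starRingEnd_apply, star_trivial] at this
        norm_num at this
        linarith
      have hgvi : g i (v i) = 0 := congrFun hzv i
      by_contra hmem
      simp only [Set.mem_Icc, not_and_or, not_le] at hmem
      rcases hmem with hlo | hhi
      · have h1 : g i (vlo i) < g i (v i) :=
          hdec1 i (Set.mem_Iic.mpr hlo.le) (Set.mem_Iic.mpr le_rfl) hlo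
        have h2 : g i (vlo i) = 0 := hzero i _ ⟨le_refl _, (hlt i).le⟩
        rw [h2, hgvi] at h1
        exact lt_irrefl _ h1
      · have h1 : g i (v i) < g i (vhi i) :=
          hdec2 i (Set.mem_Ici.mpr le_rfl) (Set.mem_Ici.mpr hhi.le) hhi
        have h2 : g i (vhi i) = 0 := hzero i _ ⟨(hlt i).le, le_refl _⟩
        rw [h2, hgvi] at h1
        exact lt_irrefl _ h1
    · intro h
      have : (fun j => g j (v j)) = 0 := funext fun j => hzero j _ (h j)
      rw [this]
      simp
end

section
/- Suppose g : ℝⁿ → ℝⁿ acts componentwise, each g_i is continuously differentiable, nonincreasing on ℝ, strictly decreasing outside [v̲_i, v̄_i], zero on [v̲_i, v̄_i], and coercive (|g_i(x)| → ∞ as |x| → ∞). Let X be symmetric positive definite and let v(t) solve v̇ = X g(v) with any initial condition. Then t ↦ V(v(t)) = ½ g(v(t))ᵀ X g(v(t)) is nonincreasing. -/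
open Matrix

lemma antitone_hasDerivAt_nonpos {f : ℝ → ℝ} {f' x : ℝ}
    (hf : Antitone f) (h : HasDerivAt f f' x) : f' ≤ 0 := by
  have ht := hasDerivAt_iff_tendsto_slope.mp h
  refine le_of_tendsto ht (eventually_nhdsWithin_of_forall fun y hy => ?_)
  have hy' : y ≠ x := hy
  rw [slope_def_field]
  rcases hy'.lt_or_gt with hlt | hlt
  · exact div_nonpos_of_nonneg_of_nonpos (sub_nonneg.2 (hf hlt.le)) (sub_nonpos.2 hlt.le)
  · exact div_nonpos_of_nonpos_of_nonneg (sub_nonpos.2 (hf hlt.le)) (sub_nonneg.2 hlt.le)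

theorem lyapunov_nonincreasing_along_trajectory {n : ℕ}
    (X : Matrix (Fin n) (Fin n) ℝ) (hX : X.PosDef)
    (vlo vhi : Fin n → ℝ) (g : Fin n → ℝ → ℝ)
    (hC1 : ∀ i, ContDiff ℝ 1 (g i))
    (hanti : ∀ i, Antitone (g i))
    (hs1 : ∀ i, StrictAntiOn (g i) (Set.Iic (vlo i)))
    (hs2 : ∀ i, StrictAntiOn (g i) (Set.Ici (vhi i)))
    (hzero : ∀ i, ∀ x ∈ Set.Icc (vlo i) (vhi i), g i x = 0)
    (hcoe1 : ∀ i, Filter.Tendsto (fun x => |g i x|) Filter.atTop Filter.atTop)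
    (hcoe2 : ∀ i, Filter.Tendsto (fun x => |g i x|) Filter.atBot Filter.atTop)
    (v : ℝ → Fin n → ℝ)
    (hv : ∀ t, HasDerivAt v (X.mulVec fun i => g i (v t i)) t) :
    Antitone fun t =>
      (1 / 2) * ((fun i => g i (v t i)) ⬝ᵥ X.mulVec fun i => g i (v t i)) := by
  -- notation
  set F : ℝ → Fin n → ℝ := fun t i => g i (v t i) with hF
  set w : ℝ → Fin n → ℝ := fun t => X.mulVec (F t) with hw
  set F' : ℝ → Fin n → ℝ := fun t i => deriv (g i) (v t i) * w t i with hF'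
  -- componentwise derivative of v
  have hvi : ∀ t i, HasDerivAt (fun s => v s i) (w t i) t := fun t i =>
    hasDerivAt_pi.mp (hv t) i
  -- derivative of each component of F
  have hFi : ∀ t i, HasDerivAt (fun s => g i (v s i)) (F' t i) t := by
    intro t i
    exact (((hC1 i).differentiable one_ne_zero (v t i)).hasDerivAt).comp t (hvi t i)
  -- symmetry of X
  have hsym : Xᵀ = X := hX.1.eq
  -- derivative of V
  have key : ∀ t, HasDerivAt
      (fun t => (1 / 2) * ((fun i => g i (v t i)) ⬝ᵥ X.mulVec fun i => g i (v t i)))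
      (∑ i, deriv (g i) (v t i) * w t i * w t i) t := by
    intro t
    have h1 : HasDerivAt
        (fun s => ∑ i, g i (v s i) * ∑ j, X i j * g j (v s j))
        (∑ i, (F' t i * ∑ j, X i j * g j (v t j)
          + g i (v t i) * ∑ j, X i j * F' t j)) t := by
      apply HasDerivAt.fun_sum
      intro i _
      apply HasDerivAt.mul (hFi t i)
      exact HasDerivAt.fun_sum fun j _ => (hFi t j).const_mul (X i j)
    have h2 : HasDerivAt
        (fun s => (1 / 2) * ((fun i => g i (v s i)) ⬝ᵥ X.mulVec fun i => g i (v s i)))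
        ((1 / 2) * ∑ i, (F' t i * ∑ j, X i j * g j (v t j)
          + g i (v t i) * ∑ j, X i j * F' t j)) t := by
      have := h1.const_mul (1 / 2)
      convert this using 2 with s
      all_goals rfl
    convert h2 using 1
    -- identify the derivative value
    have hA : (∑ i, F' t i * ∑ j, X i j * g j (v t j)) = F' t ⬝ᵥ w t := by
      simp [dotProduct, Matrix.mulVec, hw, hF]
    have hB : (∑ i, g i (v t i) * ∑ j, X i j * F' t j) = F t ⬝ᵥ X.mulVec (F' t) := by
      simp [dotProduct, Matrix.mulVec, hF]
    have hBA : F t ⬝ᵥ X.mulVec (F' t) = F' t ⬝ᵥ w t := by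
      rw [Matrix.dotProduct_mulVec, ← hsym, Matrix.vecMul_transpose,
        dotProduct_comm]
    have : (∑ i, deriv (g i) (v t i) * w t i * w t i) = F' t ⬝ᵥ w t := by
      simp [dotProduct, hF']
    rw [Finset.sum_add_distrib, hA, hB, hBA, this]
    ring
  refine antitone_of_hasDerivAt_nonpos key fun t => ?_
  apply Finset.sum_nonpos
  intro i _
  have hd : deriv (g i) (v t i) ≤ 0 :=
    antitone_hasDerivAt_nonpos (hanti i) ((hC1 i).differentiable one_ne_zero (v t i)).hasDerivAt
  calc deriv (g i) (v t i) * w t i * w t i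
      = deriv (g i) (v t i) * (w t i * w t i) := by ring
    _ ≤ 0 := mul_nonpos_of_nonpos_of_nonneg hd (mul_self_nonneg _)
end
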